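/- If (a_n) is a strictly increasing sequence of natural numbers, all greater than 1 and pairwise relatively prime, and the series ∑ 1/a_n diverges, then infinitely many terms a_n are prime. -/

import Mathlib

theorem stmt_2 (a : ℕ → ℕ) (hmono : StrictMono a) (h1 : ∀ n, 1 < a n)
    (hcop : ∀ m n, m ≠ n → Nat.Coprime (a m) (a n))
    (hdiv : ¬ Summable (fun n => (1 : ℝ) / a n)) :
    {n | (a n).Prime}.Infinite := by
  by_contra hfin
  rw [Set.not_infinite] at hfin
  apply hdiv
  have hinj : Function.Injective (fun n => (a n).minFac) := by
    intro m n h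
    simp only at h
    by_contra hne
    have hc := hcop m n hne
    have hd1 : (a m).minFac ∣ a m := Nat.minFac_dvd _
    have hd2 : (a m).minFac ∣ a n := h ▸ Nat.minFac_dvd _
    have : (a m).minFac ∣ Nat.gcd (a m) (a n) := Nat.dvd_gcd hd1 hd2
    rw [hc] at this
    have h2 := Nat.eq_one_of_dvd_one this
    have h3 := (Nat.minFac_prime (h1 m).ne').two_le
    omega
  have hsum : Summable (fun n => (1 : ℝ) / ((a n).minFac) ^ 2) := by
    have h2 : Summable (fun p : ℕ => (1 : ℝ) / p ^ 2) :=
      Real.summable_one_div_nat_pow.2 one_lt_two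
    exact h2.comp_injective hinj
  apply Summable.of_norm_bounded_eventually hsum
  filter_upwards [hfin.compl_mem_cofinite] with n hn
  simp only [Set.mem_compl_iff, Set.mem_setOf_eq] at hn
  have hle : (a n).minFac ^ 2 ≤ a n := Nat.minFac_sq_le_self (lt_trans one_pos (h1 n)) hn
  rw [norm_div, norm_one]
  have hm2 := (Nat.minFac_prime (h1 n).ne').two_le
  have hpos : (0:ℝ) < ((a n).minFac : ℝ) ^ 2 := by
    have : (0:ℝ) < ((a n).minFac : ℝ) := by exact_mod_cast Nat.lt_of_lt_of_le two_pos hm2 |>.trans_le le_rfl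
    positivity
  rw [Real.norm_eq_abs, abs_of_nonneg (by positivity : (0:ℝ) ≤ (a n : ℝ))]
  apply one_div_le_one_div_of_le hpos
  exact_mod_cast hle
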